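/- (Banach–Mazur unfolding) Let A ⊆ ωω and B ⊆ ωω × ωω with A = π₁[B] the projection of B. If Player 2 has a winning strategy in the unfolded Banach–Mazur game G*_{A,B}, then Player 2 has a winning strategy in the Banach–Mazur game G*_A; if Player 1 wins G*_{A,B}, then Player 1 wins G*_A. -/

import Mathlib

/-- Position after `n` moves in a game with string moves, players using `σ`, `τ`. -/
def bmRun (σ τ : List (List ℕ) → List ℕ) : ℕ → List (List ℕ)
  | 0 => []
  | n + 1 => bmRun σ τ n ++
      [if n % 2 = 0 then σ (bmRun σ τ n) else τ (bmRun σ τ n)]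

/-- The `n`-th string played. -/
def bmMove (σ τ : List (List ℕ) → List ℕ) (n : ℕ) : List ℕ :=
  if n % 2 = 0 then σ (bmRun σ τ n) else τ (bmRun σ τ n)

/-- The real obtained by concatenating all the strings played. -/
def bmLimit (σ τ : List (List ℕ) → List ℕ) (k : ℕ) : ℕ :=
  (((List.range (k + 1)).map (bmMove σ τ)).flatten).getD k 0

/-- Player 2 has a winning strategy in the Banach–Mazur game `G*_A`. -/
def P2WinsBM (A : Set (ℕ → ℕ)) : Prop :=
  ∃ τ, (∀ p, τ p ≠ []) ∧ ∀ σ, (∀ p, σ p ≠ []) → bmLimit σ τ ∈ A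

/-- Player 1 has a winning strategy in the Banach–Mazur game `G*_A`. -/
def P1WinsBM (A : Set (ℕ → ℕ)) : Prop :=
  ∃ σ, (∀ p, σ p ≠ []) ∧ ∀ τ, (∀ p, τ p ≠ []) → bmLimit σ τ ∉ A

/-- Position after `n` moves in the unfolded game (each move is a string
together with an auxiliary natural number; only Player 2's numbers matter). -/
def bmRunU (σ τ : List (List ℕ × ℕ) → List ℕ × ℕ) : ℕ → List (List ℕ × ℕ)
  | 0 => []
  | n + 1 => bmRunU σ τ n ++
      [if n % 2 = 0 then σ (bmRunU σ τ n) else τ (bmRunU σ τ n)]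

/-- The `n`-th move in the unfolded game. -/
def bmMoveU (σ τ : List (List ℕ × ℕ) → List ℕ × ℕ) (n : ℕ) : List ℕ × ℕ :=
  if n % 2 = 0 then σ (bmRunU σ τ n) else τ (bmRunU σ τ n)

/-- The real obtained by concatenating the strings played in the unfolded game. -/
def bmLimitU (σ τ : List (List ℕ × ℕ) → List ℕ × ℕ) (k : ℕ) : ℕ :=
  (((List.range (k + 1)).map fun n => (bmMoveU σ τ n).1).flatten).getD k 0

/-- The auxiliary real produced by Player 2's extra moves in the unfolded game. -/
def bmAuxU (σ τ : List (List ℕ × ℕ) → List ℕ × ℕ) (n : ℕ) : ℕ :=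
  (bmMoveU σ τ (2 * n + 1)).2

/-- Player 2 has a winning strategy in the unfolded Banach–Mazur game `G*_{A,B}`. -/
def P2WinsBMU (A : Set (ℕ → ℕ)) (B : Set ((ℕ → ℕ) × (ℕ → ℕ))) : Prop :=
  ∃ τ, (∀ p, (τ p).1 ≠ []) ∧ ∀ σ, (∀ p, (σ p).1 ≠ []) →
    bmLimitU σ τ ∈ A ∧ (bmLimitU σ τ, bmAuxU σ τ) ∈ B

/-- Player 1 has a winning strategy in the unfolded Banach–Mazur game `G*_{A,B}`. -/
def P1WinsBMU (A : Set (ℕ → ℕ)) (B : Set ((ℕ → ℕ) × (ℕ → ℕ))) : Prop :=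
  ∃ σ, (∀ p, (σ p).1 ≠ []) ∧ ∀ τ, (∀ p, (τ p).1 ≠ []) →
    ¬(bmLimitU σ τ ∈ A ∧ (bmLimitU σ τ, bmAuxU σ τ) ∈ B)


namespace BMaux

variable {α : Type} (f g : List α → α)

def gRun (f g : List α → α) : ℕ → List α
  | 0 => []
  | n + 1 => gRun f g n ++ [if n % 2 = 0 then f (gRun f g n) else g (gRun f g n)]

def gMove (n : ℕ) : α :=
  if n % 2 = 0 then f (gRun f g n) else g (gRun f g n)

lemma gRun_succ (n : ℕ) : gRun f g (n + 1) = gRun f g n ++ [gMove f g n] := rfl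

lemma gRun_length (n : ℕ) : (gRun f g n).length = n := by
  induction n with
  | zero => rfl
  | succ n ih => rw [gRun_succ]; simp [ih]

lemma gRun_map (n : ℕ) : gRun f g n = (List.range n).map (gMove f g) := by
  induction n with
  | zero => rfl
  | succ n ih => rw [gRun_succ, List.range_succ, List.map_append, ih]; rfl

lemma gRun_prefix {m n : ℕ} (h : m ≤ n) : ∃ t, gRun f g n = gRun f g m ++ t := by
  induction n with
  | zero => exact ⟨[], by simp [Nat.le_zero.mp h]⟩
  | succ n ih =>
    rcases Nat.lt_or_ge m (n + 1) with h' | h'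
    · obtain ⟨t, ht⟩ := ih (Nat.lt_succ_iff.mp h')
      exact ⟨t ++ [gMove f g n], by rw [gRun_succ, ht, List.append_assoc]⟩
    · have : m = n + 1 := le_antisymm h h'
      exact ⟨[], by simp [this]⟩

lemma gRun_take {m n : ℕ} (h : m ≤ n) : (gRun f g n).take m = gRun f g m := by
  obtain ⟨t, ht⟩ := gRun_prefix f g h
  rw [ht, List.take_left' (gRun_length f g m)]

section proj
variable (π : α → List ℕ)

lemma flatten_prefix {m n : ℕ} (h : m ≤ n) :
    ∃ t, ((gRun f g n).map π).flatten = ((gRun f g m).map π).flatten ++ t := by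
  obtain ⟨t, ht⟩ := gRun_prefix f g h
  exact ⟨(t.map π).flatten, by rw [ht]; simp⟩

lemma flatten_len (hne : ∀ n, π (gMove f g n) ≠ []) (n : ℕ) :
    n ≤ ((gRun f g n).map π).flatten.length := by
  induction n with
  | zero => simp
  | succ n ih =>
    rw [gRun_succ]
    have : (π (gMove f g n)).length ≠ 0 := by
      simpa using hne n
    simp only [List.map_append, List.flatten_append, List.length_append]
    simp only [List.map_cons, List.map_nil, List.flatten_cons, List.flatten_nil,
      List.append_nil]
    omega

lemma flatten_len_strict (hne : ∀ n, π (gMove f g n) ≠ []) {m n : ℕ} (h : m < n) :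
    ((gRun f g m).map π).flatten.length < ((gRun f g n).map π).flatten.length := by
  have : StrictMono fun n => ((gRun f g n).map π).flatten.length := by
    apply strictMono_nat_of_lt_succ
    intro n
    rw [gRun_succ]
    have : (π (gMove f g n)).length ≠ 0 := by simpa using hne n
    simp only [List.map_append, List.flatten_append, List.length_append,
      List.map_cons, List.map_nil, List.flatten_cons, List.flatten_nil, List.append_nil]
    omega
  exact this h

lemma getD_stab (hne : ∀ n, π (gMove f g n) ≠ []) {k M : ℕ} (h : k + 1 ≤ M) :
    ((gRun f g M).map π).flatten.getD k 0 = ((gRun f g (k + 1)).map π).flatten.getD k 0 := by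
  obtain ⟨t, ht⟩ := flatten_prefix f g π h
  rw [ht]
  exact List.getD_append _ _ _ _ (lt_of_lt_of_le (Nat.lt_succ_self k) (flatten_len f g π hne (k + 1)))

end proj

lemma bmRun_eq (σ τ : List (List ℕ) → List ℕ) : bmRun σ τ = gRun σ τ := by
  funext n
  induction n with
  | zero => rfl
  | succ n ih => rw [bmRun, gRun, ih]

lemma bmMove_eq (σ τ : List (List ℕ) → List ℕ) : bmMove σ τ = gMove σ τ := by
  funext n; rw [bmMove, gMove, bmRun_eq]

lemma bmLimit_eq (σ τ : List (List ℕ) → List ℕ) (k : ℕ) :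
    bmLimit σ τ k = ((gRun σ τ (k + 1)).map id).flatten.getD k 0 := by
  rw [bmLimit, gRun_map, bmMove_eq]
  simp

lemma bmRunU_eq (σ τ : List (List ℕ × ℕ) → List ℕ × ℕ) : bmRunU σ τ = gRun σ τ := by
  funext n
  induction n with
  | zero => rfl
  | succ n ih => rw [bmRunU, gRun, ih]

lemma bmMoveU_eq (σ τ : List (List ℕ × ℕ) → List ℕ × ℕ) : bmMoveU σ τ = gMove σ τ := by
  funext n; rw [bmMoveU, gMove, bmRunU_eq]

lemma bmLimitU_eq (σ τ : List (List ℕ × ℕ) → List ℕ × ℕ) (k : ℕ) :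
    bmLimitU σ τ k = ((gRun σ τ (k + 1)).map Prod.fst).flatten.getD k 0 := by
  rw [bmLimitU, gRun_map, bmMoveU_eq]
  simp [Function.comp_def]

def liftA (τu : List (List ℕ × ℕ) → List ℕ × ℕ) : ℕ → List (List ℕ) → List (List ℕ × ℕ)
  | 0, _ => []
  | n + 1, p => liftA τu n p ++
      [(p.getD n [], if n % 2 = 0 then 0 else (τu (liftA τu n p)).2)]

lemma liftA_ext (τu : List (List ℕ × ℕ) → List ℕ × ℕ) (n : ℕ) {p q : List (List ℕ)}
    (h : ∀ i < n, p.getD i [] = q.getD i []) : liftA τu n p = liftA τu n q := by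
  induction n with
  | zero => rfl
  | succ n ih =>
    have e := ih (fun i hi => h i (Nat.lt_succ_of_lt hi))
    simp only [liftA, e, h n (Nat.lt_succ_self n)]

lemma liftA_map_fst (τu : List (List ℕ × ℕ) → List ℕ × ℕ) (n : ℕ) (p : List (List ℕ))
    (h : n ≤ p.length) : (liftA τu n p).map Prod.fst = p.take n := by
  induction n with
  | zero => rfl
  | succ n ih =>
    have hn : n < p.length := h
    simp only [liftA, List.map_append, ih (le_of_lt hn), List.map_cons, List.map_nil]
    rw [List.getD_eq_getElem _ _ hn, ← List.take_concat_get hn, List.concat_eq_append]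

theorem p2dir (A : Set (ℕ → ℕ)) (B : Set ((ℕ → ℕ) × (ℕ → ℕ))) :
    P2WinsBMU A B → P2WinsBM A := by
  rintro ⟨τu, hτu1, hτu2⟩
  set τ : List (List ℕ) → List ℕ := fun p => (τu (liftA τu p.length p)).1 with hτdef
  refine ⟨τ, fun p => hτu1 _, ?_⟩
  intro σ hσ
  set σu : List (List ℕ × ℕ) → List ℕ × ℕ := fun q => (σ (q.map Prod.fst), 0) with hσudef
  have hσu1 : ∀ q, (σu q).1 ≠ [] := fun q => hσ _
  have key : ∀ n, gRun σu τu n = liftA τu n (gRun σ τ n) := by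
    intro n
    induction n with
    | zero => rfl
    | succ n ih =>
      have hlen : (gRun σ τ n).length = n := gRun_length σ τ n
      have e1 : liftA τu n (gRun σ τ n ++ [gMove σ τ n]) = liftA τu n (gRun σ τ n) :=
        liftA_ext τu n (fun i hi => List.getD_append _ _ _ _ (by rw [hlen]; exact hi))
      have e2 : (gRun σ τ n ++ [gMove σ τ n]).getD n [] = gMove σ τ n := by
        rw [List.getD_append_right _ _ _ _ hlen.le]
        simp [hlen]
      have h1 : liftA τu (n + 1) (gRun σ τ (n + 1)) = liftA τu n (gRun σ τ n) ++
          [(gMove σ τ n, if n % 2 = 0 then 0 else (τu (liftA τu n (gRun σ τ n))).2)] := by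
        rw [gRun_succ]
        simp only [liftA, e1, e2]
      rw [gRun_succ, h1, ← ih]
      congr 1
      have e3 : (gRun σu τu n).map Prod.fst = gRun σ τ n := by
        rw [ih, liftA_map_fst τu n _ hlen.ge, List.take_of_length_le hlen.le]
      by_cases hn : n % 2 = 0
      · simp only [gMove, hn, if_true]
        exact congrArg (fun z => [(σ z, 0)]) e3
      · simp only [gMove, hn, if_false]
        have e4 : τ (gRun σ τ n) = (τu (gRun σu τu n)).1 := by
          simp only [hτdef]
          rw [hlen, ← ih]
        rw [e4]
  have hlim : bmLimit σ τ = bmLimitU σu τu := by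
    funext k
    rw [bmLimit_eq, bmLimitU_eq, key (k + 1),
      liftA_map_fst τu (k + 1) _ (gRun_length σ τ (k + 1)).ge,
      List.take_of_length_le (gRun_length σ τ (k + 1)).le, List.map_id]
  rw [hlim]
  exact (hτu2 σu hσu1).1

/-- The simulation bookkeeping for Player 1's strategy. `Rp σu p n` is the position
(in the unfolded game) of the `n`-th simulation, just before Player 1's move there. -/
def Rp (σu : List (List ℕ × ℕ) → List ℕ × ℕ) (p : List (List ℕ)) : ℕ → List (List ℕ × ℕ)
  | 0 => []
  | n + 1 =>
      (Rp σu p (Nat.unpair n).1 ++ [σu (Rp σu p (Nat.unpair n).1)]) ++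
        [((p.take (2 * n + 2)).flatten.drop
            (((Rp σu p (Nat.unpair n).1 ++ [σu (Rp σu p (Nat.unpair n).1)]).map
              Prod.fst).flatten.length),
          (Nat.unpair n).2)]
  decreasing_by all_goals exact Nat.lt_succ_of_le (Nat.unpair_left_le n)

lemma Rp_zero (σu : List (List ℕ × ℕ) → List ℕ × ℕ) (p : List (List ℕ)) :
    Rp σu p 0 = [] := by rw [Rp]

def Qp (σu : List (List ℕ × ℕ) → List ℕ × ℕ) (p : List (List ℕ)) (n : ℕ) :
    List (List ℕ × ℕ) :=
  Rp σu p n ++ [σu (Rp σu p n)]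

lemma Rp_succ (σu : List (List ℕ × ℕ) → List ℕ × ℕ) (p : List (List ℕ)) (n : ℕ) :
    Rp σu p (n + 1) = Qp σu p (Nat.unpair n).1 ++
      [((p.take (2 * n + 2)).flatten.drop
          (((Qp σu p (Nat.unpair n).1).map Prod.fst).flatten.length),
        (Nat.unpair n).2)] := by
  rw [Rp, Qp]

lemma Rp_stab (σu : List (List ℕ × ℕ) → List ℕ × ℕ) :
    ∀ (n : ℕ) {p q : List (List ℕ)}, p.take (2 * n) = q.take (2 * n) →
      Rp σu p n = Rp σu q n := by
  intro n
  induction n using Nat.strong_induction_on with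
  | _ n ih =>
    match n with
    | 0 => intro p q _; rw [Rp, Rp]
    | n + 1 =>
      intro p q h
      have hmle : (Nat.unpair n).1 ≤ n := Nat.unpair_left_le n
      have h2 : p.take (2 * (Nat.unpair n).1) = q.take (2 * (Nat.unpair n).1) := by
        have := congrArg (List.take (2 * (Nat.unpair n).1)) h
        simpa [List.take_take, inf_eq_left.mpr (by omega : 2 * (Nat.unpair n).1 ≤ 2 * (n + 1))]
          using this
      have hR : Rp σu p (Nat.unpair n).1 = Rp σu q (Nat.unpair n).1 :=
        ih _ (Nat.lt_succ_of_le hmle) h2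
      have h3 : p.take (2 * n + 2) = q.take (2 * n + 2) := by
        have e : 2 * (n + 1) = 2 * n + 2 := by ring
        rwa [e] at h
      rw [Rp_succ, Rp_succ, Qp, Qp, hR, h3]

def ccf (y : ℕ → ℕ) : ℕ → ℕ
  | 0 => 0
  | j + 1 => Nat.pair (ccf y j) (y j) + 1

lemma ccf_ge (y : ℕ → ℕ) (j : ℕ) : j ≤ ccf y j := by
  induction j with
  | zero => exact Nat.zero_le _
  | succ j ih =>
    have := Nat.left_le_pair (ccf y j) (y j)
    have : ccf y (j + 1) = Nat.pair (ccf y j) (y j) + 1 := rfl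
    omega

lemma ccf_lt (y : ℕ → ℕ) (j : ℕ) : ccf y j < ccf y (j + 1) := by
  have h1 := Nat.left_le_pair (ccf y j) (y j)
  have h2 : ccf y (j + 1) = Nat.pair (ccf y j) (y j) + 1 := rfl
  omega

theorem p1dir (A : Set (ℕ → ℕ)) (B : Set ((ℕ → ℕ) × (ℕ → ℕ)))
    (hAB : A = {x | ∃ y, (x, y) ∈ B}) : P1WinsBMU A B → P1WinsBM A := by
  rintro ⟨σu, hσu1, hσu2⟩
  set σ : List (List ℕ) → List ℕ := fun p => (σu (Rp σu p (p.length / 2))).1 with hσdef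
  refine ⟨σ, fun p => hσu1 _, ?_⟩
  intro τ hτ hx
  have hx2 := hx
  rw [hAB] at hx2
  obtain ⟨y, hy⟩ := hx2
  set Rs : ℕ → List (List ℕ × ℕ) := fun n => Rp σu (gRun σ τ (2 * n)) n with hRs
  set Qs : ℕ → List (List ℕ × ℕ) := fun n => Rs n ++ [σu (Rs n)] with hQs
  -- all moves in the real game are nonempty
  have hmove : ∀ n, gMove σ τ n ≠ [] := by
    intro n
    rw [gMove]
    split
    · simp only [hσdef]; exact hσu1 _
    · exact hτ _
  have hmove' : ∀ n, id (gMove σ τ n) ≠ [] := hmove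
  -- our strategy at even positions
  have hσrun : ∀ n, σ (gRun σ τ (2 * n)) = (σu (Rs n)).1 := by
    intro n
    simp only [hσdef, hRs, gRun_length]
    have e : 2 * n / 2 = n := by omega
    rw [e]
  -- stability of the bookkeeping along the run
  have hstab : ∀ {m M : ℕ}, m ≤ M → Rp σu (gRun σ τ (2 * M)) m = Rs m := by
    intro m M h
    rw [hRs]
    exact Rp_stab σu m (by
      rw [gRun_take σ τ (by omega : 2 * m ≤ 2 * M),
        List.take_of_length_le (gRun_length σ τ (2 * m)).le])
  have hstabQ : ∀ {m M : ℕ}, m ≤ M → Qp σu (gRun σ τ (2 * M)) m = Qs m := by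
    intro m M h
    rw [Qp, hstab h, hQs]
  -- the invariant: simulation strings match the real run
  have inv : ∀ n, ((Rs n).map Prod.fst).flatten = (gRun σ τ (2 * n)).flatten := by
    intro n
    induction n using Nat.strong_induction_on with
    | _ n ih =>
      match n with
      | 0 =>
        have h0 : Rs 0 = [] := by rw [hRs]; exact Rp_zero σu _
        rw [h0, show (2 * 0 : ℕ) = 0 from rfl]
        rfl
      | n + 1 =>
        have hmle : (Nat.unpair n).1 ≤ n := Nat.unpair_left_le n
        have hQ : Qp σu (gRun σ τ (2 * (n + 1))) (Nat.unpair n).1 = Qs (Nat.unpair n).1 :=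
          hstabQ (by omega)
        have e : Rs (n + 1) = Qs (Nat.unpair n).1 ++
            [(((gRun σ τ (2 * (n + 1))).take (2 * n + 2)).flatten.drop
                (((Qs (Nat.unpair n).1).map Prod.fst).flatten.length), (Nat.unpair n).2)] := by
          rw [hRs]
          simp only
          rw [Rp_succ, hQ]
        have htake : (gRun σ τ (2 * (n + 1))).take (2 * n + 2) = gRun σ τ (2 * (n + 1)) := by
          apply List.take_of_length_le
          rw [gRun_length]
          omega
        have hQstr : ((Qs (Nat.unpair n).1).map Prod.fst).flatten =
            (gRun σ τ (2 * (Nat.unpair n).1 + 1)).flatten := by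
          rw [hQs]
          simp only [List.map_append, List.flatten_append, List.map_cons, List.map_nil,
            List.flatten_cons, List.flatten_nil, List.append_nil]
          rw [ih (Nat.unpair n).1 (by omega)]
          rw [gRun_succ, List.flatten_append]
          congr 1
          have heven : (2 * (Nat.unpair n).1) % 2 = 0 := by omega
          rw [gMove, if_pos heven, hσrun]
          simp
        obtain ⟨t, ht⟩ : ∃ t, gRun σ τ (2 * (n + 1)) =
            gRun σ τ (2 * (Nat.unpair n).1 + 1) ++ t :=
          gRun_prefix σ τ (by omega)
        rw [e]
        simp only [List.map_append, List.flatten_append, List.map_cons, List.map_nil,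
          List.flatten_cons, List.flatten_nil, List.append_nil]
        rw [hQstr, htake, ht, List.flatten_append, List.drop_left]
  have invQ : ∀ n, ((Qs n).map Prod.fst).flatten = (gRun σ τ (2 * n + 1)).flatten := by
    intro n
    rw [hQs]
    simp only [List.map_append, List.flatten_append, List.map_cons, List.map_nil,
      List.flatten_cons, List.flatten_nil, List.append_nil]
    rw [inv n, gRun_succ, List.flatten_append]
    congr 1
    have heven : (2 * n) % 2 = 0 := by omega
    rw [gMove, if_pos heven, hσrun]
    simp
  -- chunks
  set chunkj : ℕ → List ℕ := fun j =>
    (gRun σ τ (2 * ccf y (j + 1))).flatten.drop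
      ((gRun σ τ (2 * ccf y j + 1)).flatten.length) with hchunk
  have hflatmono : ∀ {a b : ℕ}, a < b →
      (gRun σ τ a).flatten.length < (gRun σ τ b).flatten.length := by
    intro a b h
    have := flatten_len_strict σ τ id hmove' h
    simpa using this
  have hchunk_ne : ∀ j, chunkj j ≠ [] := by
    intro j
    rw [hchunk]
    simp only
    intro hcon
    rw [List.drop_eq_nil_iff] at hcon
    have h1 : 2 * ccf y j + 1 < 2 * ccf y (j + 1) := by have := ccf_lt y j; omega
    have := hflatmono h1
    omega
  -- Player 2's strategy in the unfolded game realizing `y`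
  set τu : List (List ℕ × ℕ) → List ℕ × ℕ :=
    fun q => (chunkj (q.length / 2), y (q.length / 2)) with hτudef
  have hτu1 : ∀ q, (τu q).1 ≠ [] := fun q => hchunk_ne _
  -- the chain
  have chain : ∀ j, Rs (ccf y (j + 1)) = Qs (ccf y j) ++ [(chunkj j, y j)] := by
    intro j
    have hcc : ccf y (j + 1) = Nat.pair (ccf y j) (y j) + 1 := rfl
    have hup : Nat.unpair (Nat.pair (ccf y j) (y j)) = (ccf y j, y j) := Nat.unpair_pair _ _
    rw [hRs]
    simp only
    rw [hcc, Rp_succ, hup]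
    simp only
    have hQ : Qp σu (gRun σ τ (2 * (Nat.pair (ccf y j) (y j) + 1))) (ccf y j) = Qs (ccf y j) := by
      have := Nat.left_le_pair (ccf y j) (y j)
      exact hstabQ (by omega)
    rw [hQ]
    congr 2
    · have htake : (gRun σ τ (2 * (Nat.pair (ccf y j) (y j) + 1))).take
          (2 * Nat.pair (ccf y j) (y j) + 2) = gRun σ τ (2 * (Nat.pair (ccf y j) (y j) + 1)) := by
        apply List.take_of_length_le
        rw [gRun_length]
        omega
      rw [htake, invQ (ccf y j), hchunk]
      simp only
      rw [hcc]
  have lenRs : ∀ j, (Rs (ccf y j)).length = 2 * j := by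
    intro j
    induction j with
    | zero =>
      have h0 : Rs 0 = [] := by rw [hRs]; exact Rp_zero σu _
      rw [show ccf y 0 = 0 from rfl, h0]
      rfl
    | succ j ih =>
      rw [chain j]
      simp only [List.length_append, hQs, List.length_append, List.length_cons,
        List.length_nil, ih]
      omega
  -- identifying the unfolded run with the chain
  have uchain : ∀ j, gRun σu τu (2 * j) = Rs (ccf y j) ∧
      gRun σu τu (2 * j + 1) = Qs (ccf y j) := by
    intro j
    induction j with
    | zero =>
      have h0 : Rs 0 = [] := by rw [hRs]; exact Rp_zero σu _
      constructor
      · show gRun σu τu 0 = Rs 0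
        rw [h0]
        rfl
      · show gRun σu τu (0 + 1) = Qs 0
        rw [gRun_succ, hQs]
        simp only [h0]
        rw [gMove, if_pos (by omega : 0 % 2 = 0)]
        rfl
    | succ j ih =>
      have hlenQ : (gRun σu τu (2 * j + 1)).length = 2 * j + 1 := gRun_length σu τu _
      have hmv : gMove σu τu (2 * j + 1) = (chunkj j, y j) := by
        rw [gMove, if_neg (by omega : ¬(2 * j + 1) % 2 = 0), hτudef]
        simp only [gRun_length]
        rw [show (2 * j + 1) / 2 = j by omega]
      have h1 : gRun σu τu (2 * (j + 1)) = Rs (ccf y (j + 1)) := by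
        rw [show 2 * (j + 1) = (2 * j + 1) + 1 by ring, gRun_succ, hmv, ih.2, chain j]
      constructor
      · exact h1
      · rw [gRun_succ, h1, gMove, if_pos (by omega : (2 * (j + 1)) % 2 = 0)]
        rw [show gRun σu τu (2 * (j + 1)) = Rs (ccf y (j + 1)) from h1, hQs]
  -- unfolded moves are nonempty
  have hUmove : ∀ n, (gMove σu τu n).1 ≠ [] := by
    intro n
    rw [gMove]
    split
    · exact hσu1 _
    · exact hτu1 _
  -- the limits agree
  have hx' : bmLimitU σu τu = bmLimit σ τ := by
    funext k
    rw [bmLimitU_eq, bmLimit_eq]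
    have hk1 : k + 1 ≤ 2 * ccf y (k + 1) + 1 := by have := ccf_ge y (k + 1); omega
    rw [← getD_stab σu τu Prod.fst hUmove (show k + 1 ≤ 2 * (k + 1) + 1 by omega),
      ← getD_stab σ τ id hmove' hk1]
    rw [(uchain (k + 1)).2, invQ (ccf y (k + 1))]
    simp
  -- the auxiliary real is y
  have hy' : bmAuxU σu τu = y := by
    funext n
    rw [bmAuxU, bmMoveU_eq, gMove, if_neg (by omega : ¬(2 * n + 1) % 2 = 0), hτudef]
    simp only [gRun_length]
    rw [show (2 * n + 1) / 2 = n by omega]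
  have hfin := hσu2 τu hτu1
  rw [hx', hy'] at hfin
  exact hfin ⟨hx, hy⟩

end BMaux

/-- Banach–Mazur unfolding: if `A` is the projection of `B`,
then a winning strategy for either player in the unfolded game `G*_{A,B}`
yields a winning strategy for the same player in `G*_A`. -/
theorem banach_mazur_unfolding (A : Set (ℕ → ℕ)) (B : Set ((ℕ → ℕ) × (ℕ → ℕ)))
    (hAB : A = {x | ∃ y, (x, y) ∈ B}) :
    (P2WinsBMU A B → P2WinsBM A) ∧ (P1WinsBMU A B → P1WinsBM A) := by
  exact ⟨BMaux.p2dir A B, BMaux.p1dir A B hAB⟩
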